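/- Let X₁, X₂ be disjoint finite sets, T₁ a topology on X₁ and T₂ on X₂, and T₁T₂ the product topology on X₁ ⊔ X₂ (Y open iff Y ∩ X₁ ∈ T₁ and Y ∩ X₂ ∈ T₂). Then U ⊚≺ T₁T₂ if and only if U = U₁U₂ with U₁ = U|_{X₁} ⊚≺ T₁ and U₂ = U|_{X₂} ⊚≺ T₂; consequently Γ(T₁T₂) = Γ(T₁)Γ(T₂), i.e. Γ is multiplicative for the disjoint-union product. -/

import Mathlib

variable {X : Type*}

/-- The specialization quasi-order of a topology: `x ≤_T y` iff every
`T`-open set containing `x` contains `y`. -/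
def leT (t : TopologicalSpace X) (x y : X) : Prop :=
  ∀ U : Set X, t.IsOpen U → x ∈ U → y ∈ U

/-- The specialization equivalence `∼_T`. -/
def simT (t : TopologicalSpace X) (x y : X) : Prop :=
  leT t x y ∧ leT t y x

/-- The topology of final segments of a relation `r`. -/
def topOfRel (r : X → X → Prop) : TopologicalSpace X where
  IsOpen U := ∀ x ∈ U, ∀ y, r x y → y ∈ U
  isOpen_univ := fun _ _ y _ => Set.mem_univ y
  isOpen_inter := fun U V hU hV x hx y hr => ⟨hU x hx.1 y hr, hV x hx.2 y hr⟩
  isOpen_sUnion := fun S hS x hx y hr => by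
    obtain ⟨U, hU, hxU⟩ := hx
    exact ⟨U, hU, hS U hU x hxU y hr⟩

/-- `T'` is finer than `T`: every `T`-open set is `T'`-open. -/
def finer (t' t : TopologicalSpace X) : Prop :=
  ∀ U : Set X, t.IsOpen U → t'.IsOpen U

/-- The quasi-order of the quotient topology `T/T'`: the transitive closure of
`x R y ↔ (x ≤_T y or y ≤_{T'} x)`. -/
def quotRel (t t' : TopologicalSpace X) : X → X → Prop :=
  Relation.ReflTransGen (fun x y => leT t x y ∨ leT t' y x)

/-- The quotient topology `T/T'`. -/
def quotTop (t t' : TopologicalSpace X) : TopologicalSpace X :=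
  topOfRel (quotRel t t')

/-- Restriction (subspace topology) of `t` to a subset `Y`. -/
def restrictT (t : TopologicalSpace X) (Y : Set X) : TopologicalSpace Y :=
  t.induced Subtype.val

/-- `T'` is `T`-admissible (`T' ⊚≺ T`). -/
def adm (t' t : TopologicalSpace X) : Prop :=
  finer t' t ∧
  (∀ Y : Set X, @IsConnected X t' Y → restrictT t' Y = restrictT t Y) ∧
  (∀ x y : X,
    (quotRel t t' x y ∧ quotRel t t' y x) ↔ (quotRel t' t' x y ∧ quotRel t' t' y x))

open scoped TensorProduct

/-- The free vector space on the set of topologies on `X`. -/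
abbrev TVect (X : Type*) := TopologicalSpace X →₀ ℚ

/-- The internal coproduct on basis elements. -/
noncomputable def GamFun (t : TopologicalSpace X) : TVect X ⊗[ℚ] TVect X :=
  ∑ᶠ (t' : TopologicalSpace X) (_ : adm t' t),
    (Finsupp.single t' (1 : ℚ)) ⊗ₜ[ℚ] (Finsupp.single (quotTop t t') (1 : ℚ))

/-- The internal coproduct as a linear map. -/
noncomputable def GamLin (X : Type*) : TVect X →ₗ[ℚ] TVect X ⊗[ℚ] TVect X :=
  Finsupp.lsum ℚ (fun t => LinearMap.smulRight (LinearMap.id : ℚ →ₗ[ℚ] ℚ) (GamFun t))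

variable {X₁ X₂ : Type*}

/-- The product topology on a disjoint union: a set is open iff its trace on
each summand is open. -/
def sumTop (t₁ : TopologicalSpace X₁) (t₂ : TopologicalSpace X₂) :
    TopologicalSpace (X₁ ⊕ X₂) where
  IsOpen U := t₁.IsOpen (Sum.inl ⁻¹' U) ∧ t₂.IsOpen (Sum.inr ⁻¹' U)
  isOpen_univ :=
    ⟨by rw [Set.preimage_univ]; exact t₁.isOpen_univ,
     by rw [Set.preimage_univ]; exact t₂.isOpen_univ⟩
  isOpen_inter := fun U V hU hV => by
    constructor
    · show t₁.IsOpen (Sum.inl ⁻¹' (U ∩ V))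
      rw [Set.preimage_inter]; exact t₁.isOpen_inter _ _ hU.1 hV.1
    · show t₂.IsOpen (Sum.inr ⁻¹' (U ∩ V))
      rw [Set.preimage_inter]; exact t₂.isOpen_inter _ _ hU.2 hV.2
  isOpen_sUnion := fun S hS => by
    letI := t₁; letI := t₂
    constructor
    · show t₁.IsOpen (Sum.inl ⁻¹' ⋃₀ S)
      rw [Set.preimage_sUnion]
      exact isOpen_biUnion fun U hU => (hS U hU).1
    · show t₂.IsOpen (Sum.inr ⁻¹' ⋃₀ S)
      rw [Set.preimage_sUnion]
      exact isOpen_biUnion fun U hU => (hS U hU).2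

/-- The product `m : T_{X₁} ⊗ T_{X₂} → T_{X₁ ⊔ X₂}` on free vector spaces. -/
noncomputable def mProd (X₁ X₂ : Type*) :
    TVect X₁ ⊗[ℚ] TVect X₂ →ₗ[ℚ] TVect (X₁ ⊕ X₂) :=
  (Finsupp.lmapDomain ℚ ℚ
      (fun p : TopologicalSpace X₁ × TopologicalSpace X₂ => sumTop p.1 p.2)).comp
    (finsuppTensorFinsupp' ℚ _ _).toLinearMap
section Aux
variable {X₁ X₂ : Type*} {a a' t₁ : TopologicalSpace X₁} {b b' t₂ : TopologicalSpace X₂}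

lemma sumTop_isOpen_iff {U : Set (X₁ ⊕ X₂)} :
    (sumTop a b).IsOpen U ↔ a.IsOpen (Sum.inl ⁻¹' U) ∧ b.IsOpen (Sum.inr ⁻¹' U) := Iff.rfl

lemma isOpen_inl_image {V : Set X₁} (hV : a.IsOpen V) :
    (sumTop a b).IsOpen (Sum.inl '' V) := by
  constructor
  · show a.IsOpen (Sum.inl ⁻¹' (Sum.inl '' V))
    rwa [Set.preimage_image_eq _ Sum.inl_injective]
  · show b.IsOpen (Sum.inr ⁻¹' (Sum.inl '' V))
    have : (Sum.inr ⁻¹' (Sum.inl '' V) : Set X₂) = ∅ := by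
      ext x; simp
    rw [this]; exact isOpen_empty (X := X₂)

lemma isOpen_inr_image {V : Set X₂} (hV : b.IsOpen V) :
    (sumTop a b).IsOpen (Sum.inr '' V) := by
  constructor
  · show a.IsOpen (Sum.inl ⁻¹' (Sum.inr '' V))
    have : (Sum.inl ⁻¹' (Sum.inr '' V) : Set X₁) = ∅ := by
      ext x; simp
    rw [this]; exact isOpen_empty (X := X₁)
  · show b.IsOpen (Sum.inr ⁻¹' (Sum.inr '' V))
    rwa [Set.preimage_image_eq _ Sum.inr_injective]

lemma induced_inl_sumTop : (sumTop a b).induced Sum.inl = a := by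
  refine TopologicalSpace.ext ?_
  ext V
  rw [isOpen_induced_iff]
  constructor
  · rintro ⟨U, hU, rfl⟩; exact hU.1
  · intro hV
    exact ⟨Sum.inl '' V, isOpen_inl_image hV, Set.preimage_image_eq _ Sum.inl_injective⟩

lemma induced_inr_sumTop : (sumTop a b).induced Sum.inr = b := by
  refine TopologicalSpace.ext ?_
  ext V
  rw [isOpen_induced_iff]
  constructor
  · rintro ⟨U, hU, rfl⟩; exact hU.2
  · intro hV
    exact ⟨Sum.inr '' V, isOpen_inr_image hV, Set.preimage_image_eq _ Sum.inr_injective⟩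

lemma sumTop_injective {u₁ v₁ : TopologicalSpace X₁} {u₂ v₂ : TopologicalSpace X₂}
    (h : sumTop u₁ u₂ = sumTop v₁ v₂) : u₁ = v₁ ∧ u₂ = v₂ := by
  constructor
  · rw [← induced_inl_sumTop (a := u₁) (b := u₂), h, induced_inl_sumTop]
  · rw [← induced_inr_sumTop (a := u₁) (b := u₂), h, induced_inr_sumTop]

/-- A topology finer than a sum topology is itself a sum topology. -/
lemma eq_sumTop_of_finer {u : TopologicalSpace (X₁ ⊕ X₂)}
    (h : finer u (sumTop t₁ t₂)) :
    u = sumTop (u.induced Sum.inl) (u.induced Sum.inr) := by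
  have hL : u.IsOpen ((Set.range (Sum.inl : X₁ → X₁ ⊕ X₂))) := by
    refine h _ ?_
    constructor
    · show t₁.IsOpen (Sum.inl ⁻¹' (Set.range (Sum.inl : X₁ → X₁ ⊕ X₂)))
      have : (Sum.inl ⁻¹' (Set.range (Sum.inl : X₁ → X₁ ⊕ X₂)) : Set X₁) = Set.univ := by ext x; simp
      rw [this]; exact isOpen_univ (X := X₁)
    · show t₂.IsOpen (Sum.inr ⁻¹' (Set.range (Sum.inl : X₁ → X₁ ⊕ X₂)))
      have : (Sum.inr ⁻¹' (Set.range (Sum.inl : X₁ → X₁ ⊕ X₂)) : Set X₂) = ∅ := by ext x; simp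
      rw [this]; exact isOpen_empty (X := X₂)
  have hR : u.IsOpen ((Set.range (Sum.inr : X₂ → X₁ ⊕ X₂))) := by
    refine h _ ?_
    constructor
    · show t₁.IsOpen (Sum.inl ⁻¹' (Set.range (Sum.inr : X₂ → X₁ ⊕ X₂)))
      have : (Sum.inl ⁻¹' (Set.range (Sum.inr : X₂ → X₁ ⊕ X₂)) : Set X₁) = ∅ := by ext x; simp
      rw [this]; exact isOpen_empty (X := X₁)
    · show t₂.IsOpen (Sum.inr ⁻¹' (Set.range (Sum.inr : X₂ → X₁ ⊕ X₂)))
      have : (Sum.inr ⁻¹' (Set.range (Sum.inr : X₂ → X₁ ⊕ X₂)) : Set X₂) = Set.univ := by ext x; simp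
      rw [this]; exact isOpen_univ (X := X₂)
  refine TopologicalSpace.ext ?_
  ext U
  constructor
  · intro hU
    exact ⟨⟨U, hU, rfl⟩, ⟨U, hU, rfl⟩⟩
  · rintro ⟨⟨V, hV, hVU⟩, ⟨W, hW, hWU⟩⟩
    have : U = (V ∩ (Set.range (Sum.inl : X₁ → X₁ ⊕ X₂))) ∪ (W ∩ (Set.range (Sum.inr : X₂ → X₁ ⊕ X₂))) := by
      ext z
      cases z with
      | inl x =>
        simp only [Set.mem_union, Set.mem_inter_iff, Set.mem_range]
        constructor
        · intro hz
          left
          have : x ∈ Sum.inl ⁻¹' U := hz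
          rw [← hVU] at this
          exact ⟨this, x, rfl⟩
        · rintro (⟨hz, _⟩ | ⟨_, y, hy⟩)
          · have : x ∈ Sum.inl ⁻¹' V := hz
            rw [hVU] at this; exact this
          · exact absurd hy (by simp)
      | inr x =>
        simp only [Set.mem_union, Set.mem_inter_iff, Set.mem_range]
        constructor
        · intro hz
          right
          have : x ∈ Sum.inr ⁻¹' U := hz
          rw [← hWU] at this
          exact ⟨this, x, rfl⟩
        · rintro (⟨_, y, hy⟩ | ⟨hz, _⟩)
          · exact absurd hy (by simp)
          · have : x ∈ Sum.inr ⁻¹' W := hz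
            rw [hWU] at this; exact this
    rw [this]
    letI := u
    exact IsOpen.union (IsOpen.inter hV hL) (IsOpen.inter hW hR)

end Aux
section Aux2
variable {X₁ X₂ : Type*} {a a' : TopologicalSpace X₁} {b b' : TopologicalSpace X₂}

lemma leT_sumTop_inl_inl {x y : X₁} :
    leT (sumTop a b) (Sum.inl x) (Sum.inl y) ↔ leT a x y := by
  constructor
  · intro h V hV hx
    have := h (Sum.inl '' V) (isOpen_inl_image hV) ⟨x, hx, rfl⟩
    rcases this with ⟨z, hz, hzy⟩
    rwa [← Sum.inl_injective hzy]
  · intro h U hU hx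
    exact h (Sum.inl ⁻¹' U) hU.1 hx

lemma leT_sumTop_inr_inr {x y : X₂} :
    leT (sumTop a b) (Sum.inr x) (Sum.inr y) ↔ leT b x y := by
  constructor
  · intro h V hV hx
    have := h (Sum.inr '' V) (isOpen_inr_image hV) ⟨x, hx, rfl⟩
    rcases this with ⟨z, hz, hzy⟩
    rwa [← Sum.inr_injective hzy]
  · intro h U hU hx
    exact h (Sum.inr ⁻¹' U) hU.2 hx

lemma not_leT_sumTop_inl_inr {x : X₁} {y : X₂} :
    ¬ leT (sumTop a b) (Sum.inl x) (Sum.inr y) := by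
  intro h
  have := h (Set.range (Sum.inl : X₁ → X₁ ⊕ X₂))
    (by constructor
        · show a.IsOpen (Sum.inl ⁻¹' (Set.range (Sum.inl : X₁ → X₁ ⊕ X₂)))
          have : (Sum.inl ⁻¹' (Set.range (Sum.inl : X₁ → X₁ ⊕ X₂)) : Set X₁) = Set.univ := by
            ext z; simp
          rw [this]; exact isOpen_univ (X := X₁)
        · show b.IsOpen (Sum.inr ⁻¹' (Set.range (Sum.inl : X₁ → X₁ ⊕ X₂)))
          have : (Sum.inr ⁻¹' (Set.range (Sum.inl : X₁ → X₁ ⊕ X₂)) : Set X₂) = ∅ := by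
            ext z; simp
          rw [this]; exact isOpen_empty (X := X₂)) ⟨x, rfl⟩
  simp at this

lemma not_leT_sumTop_inr_inl {x : X₂} {y : X₁} :
    ¬ leT (sumTop a b) (Sum.inr x) (Sum.inl y) := by
  intro h
  have := h (Set.range (Sum.inr : X₂ → X₁ ⊕ X₂))
    (by constructor
        · show a.IsOpen (Sum.inl ⁻¹' (Set.range (Sum.inr : X₂ → X₁ ⊕ X₂)))
          have : (Sum.inl ⁻¹' (Set.range (Sum.inr : X₂ → X₁ ⊕ X₂)) : Set X₁) = ∅ := by
            ext z; simp
          rw [this]; exact isOpen_empty (X := X₁)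
        · show b.IsOpen (Sum.inr ⁻¹' (Set.range (Sum.inr : X₂ → X₁ ⊕ X₂)))
          have : (Sum.inr ⁻¹' (Set.range (Sum.inr : X₂ → X₁ ⊕ X₂)) : Set X₂) = Set.univ := by
            ext z; simp
          rw [this]; exact isOpen_univ (X := X₂)) ⟨x, rfl⟩
  simp at this

lemma quotRel_sumTop_of_inl {x y : X₁} (h : quotRel a a' x y) :
    quotRel (sumTop a b) (sumTop a' b') (Sum.inl x) (Sum.inl y) := by
  refine Relation.ReflTransGen.lift Sum.inl (fun p q hpq => ?_) _ _ h
  rcases hpq with h1 | h1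
  · exact Or.inl (leT_sumTop_inl_inl.2 h1)
  · exact Or.inr (leT_sumTop_inl_inl.2 h1)

lemma quotRel_sumTop_of_inr {x y : X₂} (h : quotRel b b' x y) :
    quotRel (sumTop a b) (sumTop a' b') (Sum.inr x) (Sum.inr y) := by
  refine Relation.ReflTransGen.lift Sum.inr (fun p q hpq => ?_) _ _ h
  rcases hpq with h1 | h1
  · exact Or.inl (leT_sumTop_inr_inr.2 h1)
  · exact Or.inr (leT_sumTop_inr_inr.2 h1)

lemma quotRel_sumTop_inl {x : X₁} {w : X₁ ⊕ X₂}
    (h : quotRel (sumTop a b) (sumTop a' b') (Sum.inl x) w) :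
    ∃ y : X₁, w = Sum.inl y ∧ quotRel a a' x y := by
  induction h with
  | refl => exact ⟨x, rfl, Relation.ReflTransGen.refl⟩
  | tail _ hstep ih =>
    obtain ⟨y, rfl, hy⟩ := ih
    rename_i c _
    cases c with
    | inl z =>
      rcases hstep with h1 | h1
      · exact ⟨z, rfl, hy.tail (Or.inl (leT_sumTop_inl_inl.1 h1))⟩
      · exact ⟨z, rfl, hy.tail (Or.inr (leT_sumTop_inl_inl.1 h1))⟩
    | inr z =>
      rcases hstep with h1 | h1
      · exact absurd h1 not_leT_sumTop_inl_inr
      · exact absurd h1 not_leT_sumTop_inr_inl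

lemma quotRel_sumTop_inr {x : X₂} {w : X₁ ⊕ X₂}
    (h : quotRel (sumTop a b) (sumTop a' b') (Sum.inr x) w) :
    ∃ y : X₂, w = Sum.inr y ∧ quotRel b b' x y := by
  induction h with
  | refl => exact ⟨x, rfl, Relation.ReflTransGen.refl⟩
  | tail _ hstep ih =>
    obtain ⟨y, rfl, hy⟩ := ih
    rename_i c _
    cases c with
    | inr z =>
      rcases hstep with h1 | h1
      · exact ⟨z, rfl, hy.tail (Or.inl (leT_sumTop_inr_inr.1 h1))⟩
      · exact ⟨z, rfl, hy.tail (Or.inr (leT_sumTop_inr_inr.1 h1))⟩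
    | inl z =>
      rcases hstep with h1 | h1
      · exact absurd h1 not_leT_sumTop_inr_inl
      · exact absurd h1 not_leT_sumTop_inl_inr

lemma quotRel_sumTop_inl_inl_iff {x y : X₁} :
    quotRel (sumTop a b) (sumTop a' b') (Sum.inl x) (Sum.inl y) ↔ quotRel a a' x y := by
  constructor
  · intro h
    obtain ⟨z, hz, h'⟩ := quotRel_sumTop_inl h
    rw [Sum.inl_injective hz]; exact h'
  · exact quotRel_sumTop_of_inl

lemma quotRel_sumTop_inr_inr_iff {x y : X₂} :
    quotRel (sumTop a b) (sumTop a' b') (Sum.inr x) (Sum.inr y) ↔ quotRel b b' x y := by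
  constructor
  · intro h
    obtain ⟨z, hz, h'⟩ := quotRel_sumTop_inr h
    rw [Sum.inr_injective hz]; exact h'
  · exact quotRel_sumTop_of_inr

lemma quotTop_sumTop :
    quotTop (sumTop a b) (sumTop a' b') = sumTop (quotTop a a') (quotTop b b') := by
  refine TopologicalSpace.ext ?_
  ext U
  show (∀ z ∈ U, ∀ w, quotRel (sumTop a b) (sumTop a' b') z w → w ∈ U) ↔
    (∀ x ∈ Sum.inl ⁻¹' U, ∀ y, quotRel a a' x y → y ∈ Sum.inl ⁻¹' U) ∧
    (∀ x ∈ Sum.inr ⁻¹' U, ∀ y, quotRel b b' x y → y ∈ Sum.inr ⁻¹' U)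
  constructor
  · intro h
    exact ⟨fun x hx y hy => h _ hx _ (quotRel_sumTop_of_inl hy),
           fun x hx y hy => h _ hx _ (quotRel_sumTop_of_inr hy)⟩
  · rintro ⟨h1, h2⟩ z hz w hw
    cases z with
    | inl x =>
      obtain ⟨y, rfl, hy⟩ := quotRel_sumTop_inl hw
      exact h1 x hz y hy
    | inr x =>
      obtain ⟨y, rfl, hy⟩ := quotRel_sumTop_inr hw
      exact h2 x hz y hy

end Aux2
section Aux3
variable {X₁ X₂ : Type*} {a a' : TopologicalSpace X₁} {b b' : TopologicalSpace X₂}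

/-- Connected sets in a sum topology lie in one summand. -/
lemma connected_sumTop_subset {Y : Set (X₁ ⊕ X₂)}
    (h : @IsConnected _ (sumTop a b) Y) :
    Y ⊆ Set.range (Sum.inl : X₁ → X₁ ⊕ X₂) ∨ Y ⊆ Set.range (Sum.inr : X₂ → X₁ ⊕ X₂) := by
  by_contra hc
  push_neg at hc
  obtain ⟨hc1, hc2⟩ := hc
  obtain ⟨z₁, hz₁Y, hz₁⟩ := Set.not_subset.1 hc1
  obtain ⟨z₂, hz₂Y, hz₂⟩ := Set.not_subset.1 hc2
  obtain ⟨x₂, rfl⟩ : ∃ x, z₁ = Sum.inr x := by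
    cases z₁ with
    | inl x => exact absurd ⟨x, rfl⟩ hz₁
    | inr x => exact ⟨x, rfl⟩
  obtain ⟨x₁, rfl⟩ : ∃ x, z₂ = Sum.inl x := by
    cases z₂ with
    | inl x => exact ⟨x, rfl⟩
    | inr x => exact absurd ⟨x, rfl⟩ hz₂
  have hP := h.2
  have hLopen : (sumTop a b).IsOpen (Set.range (Sum.inl : X₁ → X₁ ⊕ X₂)) := by
    constructor
    · show a.IsOpen (Sum.inl ⁻¹' (Set.range (Sum.inl : X₁ → X₁ ⊕ X₂)))
      have : (Sum.inl ⁻¹' (Set.range (Sum.inl : X₁ → X₁ ⊕ X₂)) : Set X₁) = Set.univ := by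
        ext z; simp
      rw [this]; exact isOpen_univ (X := X₁)
    · show b.IsOpen (Sum.inr ⁻¹' (Set.range (Sum.inl : X₁ → X₁ ⊕ X₂)))
      have : (Sum.inr ⁻¹' (Set.range (Sum.inl : X₁ → X₁ ⊕ X₂)) : Set X₂) = ∅ := by
        ext z; simp
      rw [this]; exact isOpen_empty (X := X₂)
  have hRopen : (sumTop a b).IsOpen (Set.range (Sum.inr : X₂ → X₁ ⊕ X₂)) := by
    constructor
    · show a.IsOpen (Sum.inl ⁻¹' (Set.range (Sum.inr : X₂ → X₁ ⊕ X₂)))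
      have : (Sum.inl ⁻¹' (Set.range (Sum.inr : X₂ → X₁ ⊕ X₂)) : Set X₁) = ∅ := by
        ext z; simp
      rw [this]; exact isOpen_empty (X := X₁)
    · show b.IsOpen (Sum.inr ⁻¹' (Set.range (Sum.inr : X₂ → X₁ ⊕ X₂)))
      have : (Sum.inr ⁻¹' (Set.range (Sum.inr : X₂ → X₁ ⊕ X₂)) : Set X₂) = Set.univ := by
        ext z; simp
      rw [this]; exact isOpen_univ (X := X₂)
  have hsub : Y ⊆ Set.range (Sum.inl : X₁ → X₁ ⊕ X₂) ∪ Set.range (Sum.inr : X₂ → X₁ ⊕ X₂) := by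
    intro z _
    cases z with
    | inl x => exact Or.inl ⟨x, rfl⟩
    | inr x => exact Or.inr ⟨x, rfl⟩
  have := hP _ _ hLopen hRopen hsub ⟨Sum.inl x₁, hz₂Y, x₁, rfl⟩ ⟨Sum.inr x₂, hz₁Y, x₂, rfl⟩
  obtain ⟨z, _, ⟨w1, hw1⟩, ⟨w2, hw2⟩⟩ := this
  rw [← hw1] at hw2
  exact Sum.inl_ne_inr hw2.symm

/-- Image of a connected set under `inl` is connected in a sum topology. -/
lemma isConnected_inl_image {Y : Set X₁} (h : @IsConnected _ a Y) :
    @IsConnected _ (sumTop a b) (Sum.inl '' Y) := by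
  obtain ⟨⟨y0, hy0⟩, hP⟩ := h
  refine ⟨⟨Sum.inl y0, y0, hy0, rfl⟩, ?_⟩
  intro U V hU hV hcov hne1 hne2
  obtain ⟨z1, ⟨p1, hp1, rfl⟩, hz1U⟩ := hne1
  obtain ⟨z2, ⟨p2, hp2, rfl⟩, hz2V⟩ := hne2
  have hcov' : Y ⊆ Sum.inl ⁻¹' U ∪ Sum.inl ⁻¹' V := by
    intro y hy
    rcases hcov ⟨y, hy, rfl⟩ with h1 | h1
    · exact Or.inl h1
    · exact Or.inr h1
  obtain ⟨y, hyY, hyU, hyV⟩ := hP _ _ hU.1 hV.1 hcov' ⟨p1, hp1, hz1U⟩ ⟨p2, hp2, hz2V⟩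
  exact ⟨Sum.inl y, ⟨y, hyY, rfl⟩, hyU, hyV⟩

lemma isConnected_inr_image {Y : Set X₂} (h : @IsConnected _ b Y) :
    @IsConnected _ (sumTop a b) (Sum.inr '' Y) := by
  obtain ⟨⟨y0, hy0⟩, hP⟩ := h
  refine ⟨⟨Sum.inr y0, y0, hy0, rfl⟩, ?_⟩
  intro U V hU hV hcov hne1 hne2
  obtain ⟨z1, ⟨p1, hp1, rfl⟩, hz1U⟩ := hne1
  obtain ⟨z2, ⟨p2, hp2, rfl⟩, hz2V⟩ := hne2
  have hcov' : Y ⊆ Sum.inr ⁻¹' U ∪ Sum.inr ⁻¹' V := by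
    intro y hy
    rcases hcov ⟨y, hy, rfl⟩ with h1 | h1
    · exact Or.inl h1
    · exact Or.inr h1
  obtain ⟨y, hyY, hyU, hyV⟩ := hP _ _ hU.2 hV.2 hcov' ⟨p1, hp1, hz1U⟩ ⟨p2, hp2, hz2V⟩
  exact ⟨Sum.inr y, ⟨y, hyY, rfl⟩, hyU, hyV⟩

/-- Connected sets in one summand pull back to connected sets. -/
lemma isConnected_preimage_inl {Y : Set (X₁ ⊕ X₂)}
    (hsub : Y ⊆ Set.range (Sum.inl : X₁ → X₁ ⊕ X₂))
    (h : @IsConnected _ (sumTop a b) Y) :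
    @IsConnected _ a (Sum.inl ⁻¹' Y) := by
  obtain ⟨⟨z0, hz0⟩, hP⟩ := h
  obtain ⟨y0, rfl⟩ := hsub hz0
  refine ⟨⟨y0, hz0⟩, ?_⟩
  intro V W hV hW hcov hne1 hne2
  obtain ⟨p1, hp1, hp1V⟩ := hne1
  obtain ⟨p2, hp2, hp2W⟩ := hne2
  have hcov' : Y ⊆ Sum.inl '' V ∪ Sum.inl '' W := by
    intro z hz
    obtain ⟨y, rfl⟩ := hsub hz
    rcases hcov (hz : y ∈ Sum.inl ⁻¹' Y) with h1 | h1
    · exact Or.inl ⟨y, h1, rfl⟩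
    · exact Or.inr ⟨y, h1, rfl⟩
  obtain ⟨z, hzY, ⟨q1, hq1, hq1z⟩, ⟨q2, hq2, hq2z⟩⟩ :=
    hP _ _ (isOpen_inl_image hV) (isOpen_inl_image hW) hcov' ⟨Sum.inl p1, hp1, p1, hp1V, rfl⟩
      ⟨Sum.inl p2, hp2, p2, hp2W, rfl⟩
  subst hq1z
  exact ⟨q1, hzY, hq1, by rwa [Sum.inl_injective hq2z] at hq2⟩

lemma isConnected_preimage_inr {Y : Set (X₁ ⊕ X₂)}
    (hsub : Y ⊆ Set.range (Sum.inr : X₂ → X₁ ⊕ X₂))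
    (h : @IsConnected _ (sumTop a b) Y) :
    @IsConnected _ b (Sum.inr ⁻¹' Y) := by
  obtain ⟨⟨z0, hz0⟩, hP⟩ := h
  obtain ⟨y0, rfl⟩ := hsub hz0
  refine ⟨⟨y0, hz0⟩, ?_⟩
  intro V W hV hW hcov hne1 hne2
  obtain ⟨p1, hp1, hp1V⟩ := hne1
  obtain ⟨p2, hp2, hp2W⟩ := hne2
  have hcov' : Y ⊆ Sum.inr '' V ∪ Sum.inr '' W := by
    intro z hz
    obtain ⟨y, rfl⟩ := hsub hz
    rcases hcov (hz : y ∈ Sum.inr ⁻¹' Y) with h1 | h1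
    · exact Or.inl ⟨y, h1, rfl⟩
    · exact Or.inr ⟨y, h1, rfl⟩
  obtain ⟨z, hzY, ⟨q1, hq1, hq1z⟩, ⟨q2, hq2, hq2z⟩⟩ :=
    hP _ _ (isOpen_inr_image hV) (isOpen_inr_image hW) hcov' ⟨Sum.inr p1, hp1, p1, hp1V, rfl⟩
      ⟨Sum.inr p2, hp2, p2, hp2W, rfl⟩
  subst hq1z
  exact ⟨q1, hzY, hq1, by rwa [Sum.inr_injective hq2z] at hq2⟩

end Aux3
section Aux4
variable {X₁ X₂ : Type*} {a a' : TopologicalSpace X₁} {b b' : TopologicalSpace X₂}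

/-- The canonical bijection `inl⁻¹ Y → Y`. -/
def gInl (Y : Set (X₁ ⊕ X₂)) (y : ↥(Sum.inl ⁻¹' Y)) : ↥Y := ⟨Sum.inl y.val, y.2⟩

def gInr (Y : Set (X₁ ⊕ X₂)) (y : ↥(Sum.inr ⁻¹' Y)) : ↥Y := ⟨Sum.inr y.val, y.2⟩

lemma gInl_injective (Y : Set (X₁ ⊕ X₂)) : Function.Injective (gInl Y) := by
  rintro ⟨p, hp⟩ ⟨q, hq⟩ h
  simpa [gInl, Subtype.ext_iff] using h

lemma gInr_injective (Y : Set (X₁ ⊕ X₂)) : Function.Injective (gInr Y) := by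
  rintro ⟨p, hp⟩ ⟨q, hq⟩ h
  simpa [gInr, Subtype.ext_iff] using h

lemma restrict_isOpen_iff_inl {Y : Set (X₁ ⊕ X₂)}
    (hsub : Y ⊆ Set.range (Sum.inl : X₁ → X₁ ⊕ X₂)) {Z : Set ↥Y} :
    (restrictT (sumTop a b) Y).IsOpen Z ↔
      (restrictT a (Sum.inl ⁻¹' Y)).IsOpen (gInl Y ⁻¹' Z) := by
  constructor
  · intro hZ
    obtain ⟨U, hU, hUZ⟩ := (isOpen_induced_iff (t := sumTop a b)).1 hZ
    refine (isOpen_induced_iff (t := a)).2 ⟨Sum.inl ⁻¹' U, hU.1, ?_⟩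
    ext y
    show Sum.inl y.val ∈ U ↔ gInl Y y ∈ Z
    rw [← hUZ]
    exact Iff.rfl
  · intro hZ
    obtain ⟨W, hW, hWZ⟩ := (isOpen_induced_iff (t := a)).1 hZ
    refine (isOpen_induced_iff (t := sumTop a b)).2 ⟨Sum.inl '' W, isOpen_inl_image hW, ?_⟩
    ext z
    obtain ⟨y, hy⟩ := hsub z.2
    have hyY : y ∈ Sum.inl ⁻¹' Y := by rw [Set.mem_preimage, hy]; exact z.2
    have hz : z = gInl Y ⟨y, hyY⟩ := by
      apply Subtype.ext; exact hy.symm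
    constructor
    · intro hzW
      obtain ⟨w, hwW, hwz⟩ := hzW
      have : w = y := Sum.inl_injective (by rw [hwz, ← hy])
      subst this
      have : (⟨w, hyY⟩ : ↥(Sum.inl ⁻¹' Y)) ∈ Subtype.val ⁻¹' W := hwW
      rw [hWZ] at this
      rw [hz]; exact this
    · intro hzZ
      rw [hz] at hzZ
      have : (⟨y, hyY⟩ : ↥(Sum.inl ⁻¹' Y)) ∈ gInl Y ⁻¹' Z := hzZ
      rw [← hWZ] at this
      exact ⟨y, this, hy⟩

lemma restrict_isOpen_iff_inr {Y : Set (X₁ ⊕ X₂)}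
    (hsub : Y ⊆ Set.range (Sum.inr : X₂ → X₁ ⊕ X₂)) {Z : Set ↥Y} :
    (restrictT (sumTop a b) Y).IsOpen Z ↔
      (restrictT b (Sum.inr ⁻¹' Y)).IsOpen (gInr Y ⁻¹' Z) := by
  constructor
  · intro hZ
    obtain ⟨U, hU, hUZ⟩ := (isOpen_induced_iff (t := sumTop a b)).1 hZ
    refine (isOpen_induced_iff (t := b)).2 ⟨Sum.inr ⁻¹' U, hU.2, ?_⟩
    ext y
    show Sum.inr y.val ∈ U ↔ gInr Y y ∈ Z
    rw [← hUZ]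
    exact Iff.rfl
  · intro hZ
    obtain ⟨W, hW, hWZ⟩ := (isOpen_induced_iff (t := b)).1 hZ
    refine (isOpen_induced_iff (t := sumTop a b)).2 ⟨Sum.inr '' W, isOpen_inr_image hW, ?_⟩
    ext z
    obtain ⟨y, hy⟩ := hsub z.2
    have hyY : y ∈ Sum.inr ⁻¹' Y := by rw [Set.mem_preimage, hy]; exact z.2
    have hz : z = gInr Y ⟨y, hyY⟩ := by
      apply Subtype.ext; exact hy.symm
    constructor
    · intro hzW
      obtain ⟨w, hwW, hwz⟩ := hzW
      have : w = y := Sum.inr_injective (by rw [hwz, ← hy])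
      subst this
      have : (⟨w, hyY⟩ : ↥(Sum.inr ⁻¹' Y)) ∈ Subtype.val ⁻¹' W := hwW
      rw [hWZ] at this
      rw [hz]; exact this
    · intro hzZ
      rw [hz] at hzZ
      have : (⟨y, hyY⟩ : ↥(Sum.inr ⁻¹' Y)) ∈ gInr Y ⁻¹' Z := hzZ
      rw [← hWZ] at this
      exact ⟨y, this, hy⟩

lemma restrict_sumTop_eq_iff_inl {Y : Set (X₁ ⊕ X₂)}
    (hsub : Y ⊆ Set.range (Sum.inl : X₁ → X₁ ⊕ X₂)) :
    restrictT (sumTop a b) Y = restrictT (sumTop a' b') Y ↔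
      restrictT a (Sum.inl ⁻¹' Y) = restrictT a' (Sum.inl ⁻¹' Y) := by
  constructor
  · intro h
    refine TopologicalSpace.ext ?_
    ext V
    show (restrictT a (Sum.inl ⁻¹' Y)).IsOpen V ↔ (restrictT a' (Sum.inl ⁻¹' Y)).IsOpen V
    have hV : gInl Y ⁻¹' (gInl Y '' V) = V := Set.preimage_image_eq V (gInl_injective Y)
    constructor
    · intro hO
      have h1 := (restrict_isOpen_iff_inl (a := a) (b := b) hsub (Z := gInl Y '' V)).2
        (by rwa [hV])
      rw [h] at h1
      have h2 := (restrict_isOpen_iff_inl (a := a') (b := b') hsub (Z := gInl Y '' V)).1 h1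
      rwa [hV] at h2
    · intro hO
      have h1 := (restrict_isOpen_iff_inl (a := a') (b := b') hsub (Z := gInl Y '' V)).2
        (by rwa [hV])
      rw [← h] at h1
      have h2 := (restrict_isOpen_iff_inl (a := a) (b := b) hsub (Z := gInl Y '' V)).1 h1
      rwa [hV] at h2
  · intro h
    refine TopologicalSpace.ext ?_
    ext Z
    show (restrictT (sumTop a b) Y).IsOpen Z ↔ (restrictT (sumTop a' b') Y).IsOpen Z
    rw [restrict_isOpen_iff_inl (a := a) (b := b) hsub,
      restrict_isOpen_iff_inl (a := a') (b := b') hsub, h]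

lemma restrict_sumTop_eq_iff_inr {Y : Set (X₁ ⊕ X₂)}
    (hsub : Y ⊆ Set.range (Sum.inr : X₂ → X₁ ⊕ X₂)) :
    restrictT (sumTop a b) Y = restrictT (sumTop a' b') Y ↔
      restrictT b (Sum.inr ⁻¹' Y) = restrictT b' (Sum.inr ⁻¹' Y) := by
  constructor
  · intro h
    refine TopologicalSpace.ext ?_
    ext V
    show (restrictT b (Sum.inr ⁻¹' Y)).IsOpen V ↔ (restrictT b' (Sum.inr ⁻¹' Y)).IsOpen V
    have hV : gInr Y ⁻¹' (gInr Y '' V) = V := Set.preimage_image_eq V (gInr_injective Y)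
    constructor
    · intro hO
      have h1 := (restrict_isOpen_iff_inr (a := a) (b := b) hsub (Z := gInr Y '' V)).2
        (by rwa [hV])
      rw [h] at h1
      have h2 := (restrict_isOpen_iff_inr (a := a') (b := b') hsub (Z := gInr Y '' V)).1 h1
      rwa [hV] at h2
    · intro hO
      have h1 := (restrict_isOpen_iff_inr (a := a') (b := b') hsub (Z := gInr Y '' V)).2
        (by rwa [hV])
      rw [← h] at h1
      have h2 := (restrict_isOpen_iff_inr (a := a) (b := b) hsub (Z := gInr Y '' V)).1 h1
      rwa [hV] at h2
  · intro h
    refine TopologicalSpace.ext ?_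
    ext Z
    show (restrictT (sumTop a b) Y).IsOpen Z ↔ (restrictT (sumTop a' b') Y).IsOpen Z
    rw [restrict_isOpen_iff_inr (a := a) (b := b) hsub,
      restrict_isOpen_iff_inr (a := a') (b := b') hsub, h]

end Aux4
section Aux5
variable {X₁ X₂ : Type*} {a a' t₁ u₁ : TopologicalSpace X₁} {b b' t₂ u₂ : TopologicalSpace X₂}

lemma not_quotRel_sumTop_inl_inr {x : X₁} {y : X₂} :
    ¬ quotRel (sumTop a b) (sumTop a' b') (Sum.inl x) (Sum.inr y) := by
  intro h
  obtain ⟨z, hz, -⟩ := quotRel_sumTop_inl h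
  exact Sum.inl_ne_inr (hz.symm)

lemma not_quotRel_sumTop_inr_inl {x : X₂} {y : X₁} :
    ¬ quotRel (sumTop a b) (sumTop a' b') (Sum.inr x) (Sum.inl y) := by
  intro h
  obtain ⟨z, hz, -⟩ := quotRel_sumTop_inr h
  exact Sum.inl_ne_inr hz

lemma finer_sumTop_iff :
    finer (sumTop u₁ u₂) (sumTop t₁ t₂) ↔ finer u₁ t₁ ∧ finer u₂ t₂ := by
  constructor
  · intro h
    constructor
    · intro V hV
      have := (h _ (isOpen_inl_image (b := t₂) hV)).1
      rwa [Set.preimage_image_eq _ Sum.inl_injective] at this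
    · intro V hV
      have := (h _ (isOpen_inr_image (a := t₁) hV)).2
      rwa [Set.preimage_image_eq _ Sum.inr_injective] at this
  · rintro ⟨h1, h2⟩ U hU
    exact ⟨h1 _ hU.1, h2 _ hU.2⟩

lemma adm_sumTop_iff :
    adm (sumTop u₁ u₂) (sumTop t₁ t₂) ↔ adm u₁ t₁ ∧ adm u₂ t₂ := by
  constructor
  · rintro ⟨hf, hc, hq⟩
    have hf' := finer_sumTop_iff.1 hf
    constructor
    · refine ⟨hf'.1, ?_, ?_⟩
      · intro Y₁ hY₁
        have hconn := isConnected_inl_image (b := u₂) hY₁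
        have hres := hc _ hconn
        have hsub : Sum.inl '' Y₁ ⊆ Set.range (Sum.inl : X₁ → X₁ ⊕ X₂) :=
          Set.image_subset_range _ _
        have := (restrict_sumTop_eq_iff_inl hsub).1 hres
        rwa [Set.preimage_image_eq _ Sum.inl_injective] at this
      · intro x y
        have := hq (Sum.inl x) (Sum.inl y)
        rwa [quotRel_sumTop_inl_inl_iff, quotRel_sumTop_inl_inl_iff,
          quotRel_sumTop_inl_inl_iff, quotRel_sumTop_inl_inl_iff] at this
    · refine ⟨hf'.2, ?_, ?_⟩
      · intro Y₂ hY₂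
        have hconn := isConnected_inr_image (a := u₁) hY₂
        have hres := hc _ hconn
        have hsub : Sum.inr '' Y₂ ⊆ Set.range (Sum.inr : X₂ → X₁ ⊕ X₂) :=
          Set.image_subset_range _ _
        have := (restrict_sumTop_eq_iff_inr hsub).1 hres
        rwa [Set.preimage_image_eq _ Sum.inr_injective] at this
      · intro x y
        have := hq (Sum.inr x) (Sum.inr y)
        rwa [quotRel_sumTop_inr_inr_iff, quotRel_sumTop_inr_inr_iff,
          quotRel_sumTop_inr_inr_iff, quotRel_sumTop_inr_inr_iff] at this
  · rintro ⟨⟨hf1, hc1, hq1⟩, ⟨hf2, hc2, hq2⟩⟩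
    refine ⟨finer_sumTop_iff.2 ⟨hf1, hf2⟩, ?_, ?_⟩
    · intro Y hY
      rcases connected_sumTop_subset hY with hsub | hsub
      · exact (restrict_sumTop_eq_iff_inl hsub).2
          (hc1 _ (isConnected_preimage_inl hsub hY))
      · exact (restrict_sumTop_eq_iff_inr hsub).2
          (hc2 _ (isConnected_preimage_inr hsub hY))
    · intro z w
      cases z with
      | inl x =>
        cases w with
        | inl y =>
          rw [quotRel_sumTop_inl_inl_iff, quotRel_sumTop_inl_inl_iff,
            quotRel_sumTop_inl_inl_iff, quotRel_sumTop_inl_inl_iff]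
          exact hq1 x y
        | inr y =>
          constructor
          · rintro ⟨h1, -⟩; exact absurd h1 not_quotRel_sumTop_inl_inr
          · rintro ⟨h1, -⟩; exact absurd h1 not_quotRel_sumTop_inl_inr
      | inr x =>
        cases w with
        | inl y =>
          constructor
          · rintro ⟨h1, -⟩; exact absurd h1 not_quotRel_sumTop_inr_inl
          · rintro ⟨h1, -⟩; exact absurd h1 not_quotRel_sumTop_inr_inl
        | inr y =>
          rw [quotRel_sumTop_inr_inr_iff, quotRel_sumTop_inr_inr_iff,
            quotRel_sumTop_inr_inr_iff, quotRel_sumTop_inr_inr_iff]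
          exact hq2 x y

lemma adm_sumTop_char {u : TopologicalSpace (X₁ ⊕ X₂)} :
    adm u (sumTop t₁ t₂) ↔
      (u = sumTop (u.induced Sum.inl) (u.induced Sum.inr) ∧
        adm (u.induced Sum.inl) t₁ ∧ adm (u.induced Sum.inr) t₂) := by
  constructor
  · intro hu
    have hdec := eq_sumTop_of_finer hu.1
    refine ⟨hdec, ?_⟩
    have hu' : adm (sumTop (u.induced Sum.inl) (u.induced Sum.inr)) (sumTop t₁ t₂) := by
      rw [← hdec]; exact hu
    exact adm_sumTop_iff.1 hu'
  · rintro ⟨hdec, h1, h2⟩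
    rw [hdec]
    exact adm_sumTop_iff.2 ⟨h1, h2⟩

end Aux5
section Aux6

instance topSpaceFinite {X : Type*} [Finite X] : Finite (TopologicalSpace X) :=
  Finite.of_injective (fun t => {s : Set X | t.IsOpen s})
    (fun t t' h => TopologicalSpace.ext (funext fun s => propext (Set.ext_iff.1 h s)))

lemma GamFun_eq_sum {X : Type*} [Fintype (TopologicalSpace X)]
    (t : TopologicalSpace X) [DecidablePred (fun t' => adm t' t)] :
    GamFun t = ∑ t' ∈ Finset.univ.filter (fun t' => adm t' t),
      (Finsupp.single t' (1 : ℚ)) ⊗ₜ[ℚ] (Finsupp.single (quotTop t t') (1 : ℚ)) := by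
  rw [GamFun]
  rw [finsum_eq_sum_of_fintype]
  rw [Finset.sum_filter]
  congr 1
  funext t'
  exact finsum_eq_if

lemma mProd_single {X₁ X₂ : Type*} (u₁ : TopologicalSpace X₁) (u₂ : TopologicalSpace X₂) :
    mProd X₁ X₂ ((Finsupp.single u₁ (1 : ℚ)) ⊗ₜ[ℚ] (Finsupp.single u₂ (1 : ℚ))) =
      Finsupp.single (sumTop u₁ u₂) (1 : ℚ) := by
  simp [mProd, Finsupp.mapDomain_single]

end Aux6
set_option synthInstance.maxHeartbeats 1000000 in
set_option maxHeartbeats 1000000 in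
/-- Admissible refinements of a product topology are exactly products of
admissible refinements; consequently the internal coproduct is multiplicative. -/
theorem adm_sumTop_and_Gam_mul [Finite X₁] [Finite X₂]
    (t₁ : TopologicalSpace X₁) (t₂ : TopologicalSpace X₂) :
    (∀ u : TopologicalSpace (X₁ ⊕ X₂),
        adm u (sumTop t₁ t₂) ↔
          (u = sumTop (u.induced Sum.inl) (u.induced Sum.inr) ∧
            adm (u.induced Sum.inl) t₁ ∧ adm (u.induced Sum.inr) t₂)) ∧
    GamFun (sumTop t₁ t₂) =
      (TensorProduct.map (mProd X₁ X₂) (mProd X₁ X₂))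
        ((TensorProduct.tensorTensorTensorComm ℚ (TVect X₁) (TVect X₁)
            (TVect X₂) (TVect X₂))
          (GamFun t₁ ⊗ₜ[ℚ] GamFun t₂)) := by
  classical
  refine ⟨fun u => adm_sumTop_char, ?_⟩
  letI : Fintype (TopologicalSpace X₁) := Fintype.ofFinite _
  letI : Fintype (TopologicalSpace X₂) := Fintype.ofFinite _
  letI : Fintype (TopologicalSpace (X₁ ⊕ X₂)) := Fintype.ofFinite _
  rw [GamFun_eq_sum t₁, GamFun_eq_sum t₂, GamFun_eq_sum (sumTop t₁ t₂)]
  rw [TensorProduct.sum_tmul]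
  simp only [map_sum, TensorProduct.tmul_sum, TensorProduct.tensorTensorTensorComm_tmul,
    TensorProduct.map_tmul, mProd_single]
  rw [← Finset.sum_product']
  refine (Finset.sum_bij (fun p _ => sumTop p.1 p.2) ?_ ?_ ?_ ?_).symm
  · rintro ⟨u₁, u₂⟩ hp
    rw [Finset.mem_product, Finset.mem_filter, Finset.mem_filter] at hp
    rw [Finset.mem_filter]
    exact ⟨Finset.mem_univ _, adm_sumTop_iff.2 ⟨hp.1.2, hp.2.2⟩⟩
  · rintro ⟨u₁, u₂⟩ h₁ ⟨v₁, v₂⟩ h₂ h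
    obtain ⟨e1, e2⟩ := sumTop_injective h
    exact Prod.ext e1 e2
  · intro u hu
    rw [Finset.mem_filter] at hu
    obtain ⟨hdec, h1, h2⟩ := adm_sumTop_char.1 hu.2
    refine ⟨(u.induced Sum.inl, u.induced Sum.inr), ?_, hdec.symm⟩
    rw [Finset.mem_product, Finset.mem_filter, Finset.mem_filter]
    exact ⟨⟨Finset.mem_univ _, h1⟩, ⟨Finset.mem_univ _, h2⟩⟩
  · rintro ⟨u₁, u₂⟩ hp
    rw [quotTop_sumTop]
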